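/- Let R be a commutative noetherian ring and let p ∈ Spec(R). Then the small co-support of the injective hull E_R(R/p) is co-supp_R(E_R(R/p)) = {q ∈ Spec(R) : q ⊆ p}. -/

import Mathlib

/-! Preamble: a chain-level model of the derived category `D(R)` of a commutative
noetherian ring, following the conventions of the paper.  Objects of `D(R)` are
modelled by (unbounded) cochain complexes of `R`-modules (with the homological
indexing of the paper corresponding to `X_i = X^{-i}`), morphisms in `D(R)` by
morphisms of complexes, isomorphisms in `D(R)` by quasi-isomorphisms, and
`X ≃ 0` by acyclicity.  Derived functors are computed via resolutions:
semiflat/semiinjective resolutions are quantified (following the definitions of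
the paper), while for modules we use chosen projective resolutions. -/

open CategoryTheory Limits HomologicalComplex MonoidalCategory

set_option synthInstance.maxHeartbeats 1000000
set_option maxHeartbeats 4000000

noncomputable section

variable {R : Type} [CommRing R]

/-- Cochain complexes of `R`-modules, the model for objects of `D(R)`. -/
abbrev Cplx (R : Type) [CommRing R] := HomologicalComplex (ModuleCat.{0} R) (ComplexShape.up ℤ)

section Monoidal

instance (X : ModuleCat.{0} R) :
    PreservesColimitsOfSize.{0,0} ((curriedTensor (ModuleCat.{0} R)).obj X) :=
  (inferInstance : PreservesColimits (tensorLeft X))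

instance (X : ModuleCat.{0} R) :
    PreservesColimitsOfSize.{0,0} ((curriedTensor (ModuleCat.{0} R)).flip.obj X) :=
  have e : tensorLeft X ≅ (curriedTensor (ModuleCat.{0} R)).flip.obj X :=
    NatIso.ofComponents (fun Y => β_ X Y) (by intros; simp)
  preservesColimits_of_natIso e

instance : (curriedTensor (ModuleCat.{0} R)).Additive where
  map_add := by intros; ext Z; simp [curriedTensor]

instance (X : ModuleCat.{0} R) : ((curriedTensor (ModuleCat.{0} R)).obj X).Additive :=
  (inferInstance : (tensorLeft X).Additive)

instance : MonoidalCategory (Cplx R) := inferInstance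

end Monoidal

/-- A complex is acyclic exactly when it is isomorphic to `0` in `D(R)`. -/
def Acyc (X : Cplx R) : Prop := ∀ n : ℤ, IsZero (X.homology n)

/-- The complex with a module `M` concentrated in (co)homological degree `0`. -/
def sMod (M : ModuleCat.{0} R) : Cplx R :=
  (HomologicalComplex.single (ModuleCat.{0} R) (ComplexShape.up ℤ) 0).obj M

/-- A chosen projective resolution of a module `M`, regarded as a `ℤ`-indexed
cochain complex of projectives concentrated in degrees `≤ 0`; this is a semiflat
(indeed semiprojective) resolution of `M`, so that `resC M ⊗ X` computes
`M ⊗^L X` and `homCplx (resC M) X` computes `RHom(M, X)`. -/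
def resC (M : ModuleCat.{0} R) : Cplx R :=
  ((HasProjectiveResolution.out (Z := M)).some.complex).extend
    ComplexShape.embeddingDownNat

open CochainComplex.HomComplex in
/-- The `Hom`-complex `Hom(F, G)` of two complexes, as a complex of `R`-modules. -/
def homCplx (F G : Cplx R) : Cplx R where
  X n := ModuleCat.of R (Cochain F G n)
  d i j := ModuleCat.ofHom (δ_hom R F G i j)
  shape i j hij := ModuleCat.hom_ext (LinearMap.ext fun z => δ_shape i j hij z)
  d_comp_d' i j k _ _ := ModuleCat.hom_ext (LinearMap.ext fun z => δ_δ i j k z)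

open CochainComplex.HomComplex in
/-- Covariant functoriality of the `Hom`-complex in the second variable. -/
def homCplxMapRight (F : Cplx R) {X Y : Cplx R} (g : X ⟶ Y) :
    homCplx F X ⟶ homCplx F Y where
  f n := ModuleCat.ofHom {
    toFun := fun z => z.comp (Cochain.ofHom g) (add_zero n)
    map_add' := fun z₁ z₂ => Cochain.add_comp z₁ z₂ (Cochain.ofHom g) (add_zero n)
    map_smul' := fun r z => Cochain.smul_comp r z (Cochain.ofHom g) (add_zero n) }
  comm' := by
    rintro i j (rfl : i + 1 = j)
    refine ModuleCat.hom_ext (LinearMap.ext (fun (z : Cochain F X i) => ?_))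
    show δ i (i + 1) (z.comp (Cochain.ofHom g) (add_zero i))
      = (δ i (i + 1) z).comp (Cochain.ofHom g) (add_zero (i + 1))
    rw [δ_comp_zero_cochain z (Cochain.ofHom g) (i + 1) rfl, δ_ofHom,
      Cochain.comp_zero, zero_add]

open CochainComplex.HomComplex in
/-- Contravariant functoriality of the `Hom`-complex in the first variable. -/
def homCplxMapLeft {A B : Cplx R} (g : A ⟶ B) (I : Cplx R) :
    homCplx B I ⟶ homCplx A I where
  f n := ModuleCat.ofHom {
    toFun := fun z => (Cochain.ofHom g).comp z (zero_add n)
    map_add' := fun z₁ z₂ => Cochain.comp_add (Cochain.ofHom g) z₁ z₂ (zero_add n)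
    map_smul' := fun r z => Cochain.comp_smul (Cochain.ofHom g) r z (zero_add n) }
  comm' := by
    rintro i j (rfl : i + 1 = j)
    refine ModuleCat.hom_ext (LinearMap.ext (fun (z : Cochain B I i) => ?_))
    show δ i (i + 1) ((Cochain.ofHom g).comp z (zero_add i))
      = (Cochain.ofHom g).comp (δ i (i + 1) z) (zero_add (i + 1))
    rw [δ_zero_cochain_comp (Cochain.ofHom g) z (i + 1) rfl, δ_ofHom,
      Cochain.zero_comp, smul_zero, add_zero]

/-- The paper's notion of a *semiflat* complex: tensoring with it preserves
injective quasi-isomorphisms. -/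
def Semiflat (F : Cplx R) : Prop :=
  ∀ ⦃A B : Cplx R⦄ (g : A ⟶ B), (∀ n, Mono (g.f n)) → QuasiIso g → QuasiIso (F ◁ g)

/-- `π : F ⟶ X` is a semiflat resolution of `X`. -/
def IsSemiflatResolution {F X : Cplx R} (π : F ⟶ X) : Prop :=
  Semiflat F ∧ QuasiIso π

/-- The paper's notion of a *semiinjective* complex: `Hom(-, I)` converts
injective quasi-isomorphisms into surjective quasi-isomorphisms. -/
def Semiinjective (I : Cplx R) : Prop :=
  ∀ ⦃A B : Cplx R⦄ (g : A ⟶ B), (∀ n, Mono (g.f n)) → QuasiIso g →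
    (∀ n, Epi ((homCplxMapLeft g I).f n)) ∧ QuasiIso (homCplxMapLeft g I)

/-- `ι : X ⟶ I` is a semiinjective resolution of `X`. -/
def IsSemiinjectiveResolution {X I : Cplx R} (ι : X ⟶ I) : Prop :=
  Semiinjective I ∧ QuasiIso ι

/-- The residue field `κ(p) = R_p / p R_p` of a prime `p`, as an `R`-module. -/
def kappa (p : PrimeSpectrum R) : ModuleCat.{0} R :=
  ModuleCat.of R (LocalizedModule p.asIdeal.primeCompl (R ⧸ p.asIdeal))

/-- The small support of a complex: the set of primes `p` with `κ(p) ⊗^L X ≄ 0`,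
the derived tensor product being computed via the chosen (semiflat) projective
resolution of `κ(p)`. -/
def supp (X : Cplx R) : Set (PrimeSpectrum R) :=
  {p | ¬ Acyc (resC (kappa p) ⊗ X)}

/-- The small co-support of a complex: the set of primes `p` with
`RHom(κ(p), X) ≄ 0`, the derived `Hom` being computed via the chosen
(semiprojective) projective resolution of `κ(p)`. -/
def cosupp (X : Cplx R) : Set (PrimeSpectrum R) :=
  {p | ¬ Acyc (homCplx (resC (kappa p)) X)}

/-- The large support of a complex: the set of primes `p` with `X_p ≄ 0` in
`D(R_p)`, the localization being computed degreewise. -/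
def locCplx (p : PrimeSpectrum R) (X : Cplx R) :
    HomologicalComplex (ModuleCat.{0} (Localization.AtPrime p.asIdeal)) (ComplexShape.up ℤ) :=
  ((ModuleCat.extendScalars
    (algebraMap R (Localization.AtPrime p.asIdeal))).mapHomologicalComplex
      (ComplexShape.up ℤ)).obj X

def BigSupp (X : Cplx R) : Set (PrimeSpectrum R) :=
  {p | ¬ ∀ n : ℤ, IsZero ((locCplx p X).homology n)}



/-- The `a`-torsion submodule `Γ_a(M) = {m | a^n m = 0 for some n}`. -/
def torsionSubmodule (a : Ideal R) (M : Type) [AddCommGroup M] [Module R M] :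
    Submodule R M where
  carrier := {m | ∃ n : ℕ, ∀ r ∈ a ^ n, r • m = 0}
  zero_mem' := ⟨0, fun r _ => smul_zero r⟩
  add_mem' := by
    rintro x y ⟨n, hn⟩ ⟨m, hm⟩
    refine ⟨n + m, fun r hr => ?_⟩
    rw [smul_add, hn r (Ideal.pow_le_pow_right (by omega) hr),
      hm r (Ideal.pow_le_pow_right (by omega) hr), add_zero]
  smul_mem' := by
    rintro c x ⟨n, hn⟩
    exact ⟨n, fun r hr => by rw [smul_comm, hn r hr, smul_zero]⟩

/-- The `a`-torsion functor `Γ_a` on `R`-modules. -/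
def torsionFunctor (a : Ideal R) : ModuleCat.{0} R ⥤ ModuleCat.{0} R where
  obj M := ModuleCat.of R (torsionSubmodule a M)
  map {M N} f := ModuleCat.ofHom (f.hom.restrict (p := torsionSubmodule a M) (q := torsionSubmodule a N)
    (fun x hx => by
      obtain ⟨n, hn⟩ := hx
      exact ⟨n, fun r hr => by rw [← map_smul, hn r hr, map_zero]⟩))
  map_id := by intros; ext x; rfl
  map_comp := by intros; ext x; rfl

instance (a : Ideal R) : (torsionFunctor a).Additive where
  map_add := by intros; ext x; apply Subtype.ext; rfl

/-- The inclusion `Γ_a(I) ⟶ I` for a complex `I`, applied degreewise. -/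
def torsionComplexIncl (a : Ideal R) (I : Cplx R) :
    ((torsionFunctor a).mapHomologicalComplex (ComplexShape.up ℤ)).obj I ⟶ I where
  f n := ModuleCat.ofHom (torsionSubmodule a (I.X n)).subtype
  comm' := by intros; ext x; rfl

theorem adicCompletionMap_add (a : Ideal R) {M N : Type} [AddCommGroup M] [Module R M]
    [AddCommGroup N] [Module R N] (f g : M →ₗ[R] N) :
    AdicCompletion.map a (f + g) = AdicCompletion.map a f + AdicCompletion.map a g := by
  ext x
  simp [AdicCompletion.map_val_apply]

/-- The `a`-adic completion functor `Λ^a` on `R`-modules. -/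
def cmplFunctor (a : Ideal R) : ModuleCat.{0} R ⥤ ModuleCat.{0} R where
  obj M := ModuleCat.of R (AdicCompletion a M)
  map {M N} f := ModuleCat.ofHom ((AdicCompletion.map a f.hom).restrictScalars R)
  map_id M := ModuleCat.hom_ext (congrArg (LinearMap.restrictScalars R) (AdicCompletion.map_id a M))
  map_comp {M N P} f g :=
    ModuleCat.hom_ext (congrArg (LinearMap.restrictScalars R) (AdicCompletion.map_comp (I := a) f.hom g.hom).symm)

instance (a : Ideal R) : (cmplFunctor a).Additive where
  map_add {M N f g} := ModuleCat.hom_ext (congrArg (LinearMap.restrictScalars R) (adicCompletionMap_add a f.hom g.hom))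

/-- The natural map `F ⟶ Λ^a(F)` for a complex `F`, applied degreewise. -/
def cmplUnitHom (a : Ideal R) (F : Cplx R) :
    F ⟶ ((cmplFunctor a).mapHomologicalComplex (ComplexShape.up ℤ)).obj F where
  f n := ModuleCat.ofHom (AdicCompletion.of a (F.X n))
  comm' := by
    intros
    ext x
    exact AdicCompletion.ext (fun n => rfl)

/-- The `a`-adic completion functor, taking values in modules over the
completed ring `R̂ = AdicCompletion a R`. -/
def cmplHatFunctor (a : Ideal R) : ModuleCat.{0} R ⥤ ModuleCat.{0} (AdicCompletion a R) where
  obj M := ModuleCat.of (AdicCompletion a R) (AdicCompletion a M)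
  map {M N} f := ModuleCat.ofHom (AdicCompletion.map a f.hom)
  map_id M := ModuleCat.hom_ext (AdicCompletion.map_id a M)
  map_comp {M N P} f g := ModuleCat.hom_ext (AdicCompletion.map_comp (I := a) f.hom g.hom).symm

instance (a : Ideal R) : (cmplHatFunctor a).Additive where
  map_add {M N f g} := ModuleCat.hom_ext (adicCompletionMap_add a f.hom g.hom)


/-- The Koszul complex on one element `x`, i.e. `R --x--> R` in (co)homological
degrees `-1, 0`: the mapping cone of multiplication by `x` on `R`. -/
def kosOne (x : R) : Cplx R :=
  CochainComplex.mappingCone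
    ((HomologicalComplex.single (ModuleCat.{0} R) (ComplexShape.up ℤ) 0).map
      (x • 𝟙 (ModuleCat.of R R)))

/-- The Koszul complex `K^R(x₁, …, xₙ)` on a finite sequence of elements. -/
def koszul (xs : List R) : Cplx R :=
  xs.foldr (fun x K => kosOne x ⊗ K) (𝟙_ (Cplx R))

/-- `X ∈ D_+(S)`: homology bounded below (homologically), i.e. `H_i(X) = 0` for
`i ≪ 0`; in our cohomological indexing, `H^n = 0` for `n ≫ 0`. -/
def Dplus {S : Type} [CommRing S] (X : Cplx S) : Prop :=
  ∃ N : ℤ, ∀ n ≥ N, IsZero (X.homology n)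

/-- `X ∈ D_-(S)`: `H_i(X) = 0` for `i ≫ 0`. -/
def Dminus {S : Type} [CommRing S] (X : Cplx S) : Prop :=
  ∃ N : ℤ, ∀ n ≤ N, IsZero (X.homology n)

/-- `X ∈ D_b(S)`. -/
def Dbdd {S : Type} [CommRing S] (X : Cplx S) : Prop := Dplus X ∧ Dminus X

/-- `X ∈ D^f(S)`: all homology modules are finitely generated. -/
def FgH {S : Type} [CommRing S] (X : Cplx S) : Prop :=
  ∀ n : ℤ, Module.Finite S (X.homology n)

/-- `V(a)`: the primes containing the ideal `a`. -/
def primeV (a : Ideal R) : Set (PrimeSpectrum R) := PrimeSpectrum.zeroLocus (a : Set R)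

/-- A submodule is essential if it intersects every nonzero submodule nontrivially. -/
def IsEssentialSubmodule {M : Type} [AddCommGroup M] [Module R M]
    (E : Submodule R M) : Prop :=
  ∀ N : Submodule R M, N ⊓ E = ⊥ → N = ⊥

/-- `ι : X ⟶ J` is an injective resolution of `X`: a quasi-isomorphism into a
bounded-below complex of injective modules. -/
def IsInjectiveResolution {X J : Cplx R} (ι : X ⟶ J) : Prop :=
  QuasiIso ι ∧ (∀ n, Injective (J.X n)) ∧ ∃ N : ℤ, ∀ n < N, IsZero (J.X n)

/-- An injective resolution is minimal if the kernel of each differential is an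
essential submodule. -/
def IsMinimal (J : Cplx R) : Prop :=
  ∀ n : ℤ, IsEssentialSubmodule (LinearMap.ker (J.d n (n + 1)).hom)

/-- `E` is an injective hull of the module `M`: `E` is injective and contains a
copy of `M` as an essential submodule. -/
def IsInjectiveHull (M E : ModuleCat.{0} R) : Prop :=
  Injective E ∧ ∃ f : M ⟶ E, Function.Injective f ∧
    IsEssentialSubmodule (LinearMap.range f.hom)

/-- `E` occurs as a direct summand of the module `M`. -/
def IsSummand (E M : ModuleCat.{0} R) : Prop :=
  ∃ (i : E ⟶ M) (r : M ⟶ E), i ≫ r = 𝟙 E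

open CochainComplex.HomComplex in
/-- The homothety morphism `R ⟶ Hom(C, J)`, sending `r` to `r • ι`, where
`ι : C ⟶ J`; when `ι` is a semiinjective resolution of `C`, this represents
the natural homothety morphism `R → RHom(C, C)` in `D(R)`. -/
def homothetyHom (C J : Cplx R) (ι : C ⟶ J) :
    sMod (ModuleCat.of R R) ⟶ homCplx C J :=
  HomologicalComplex.mkHomFromSingle
    (show ModuleCat.of R R ⟶ (homCplx C J).X 0 from
      ModuleCat.ofHom (LinearMap.toSpanSingleton R _ (Cochain.ofHom ι)))
    (fun k _ => ModuleCat.hom_ext (LinearMap.ext (fun (r : R) =>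
      show δ 0 k (r • Cochain.ofHom ι) = 0 by rw [δ_smul, δ_ofHom, smul_zero])))

/-- A dualizing complex for `R`: a semidualizing complex (i.e. one for which the
homothety morphism `R → RHom(D, D)` is an isomorphism in `D(R)`) in `D^f_b(R)`
of finite injective dimension; the finite injective dimension and the
computation of `RHom(D, D)` are both witnessed by a bounded injective
resolution `J` of `D`. -/
def IsDualizing (D : Cplx R) : Prop :=
  Dbdd D ∧ FgH D ∧
    ∃ (J : Cplx R) (ι : D ⟶ J), QuasiIso ι ∧ (∀ n, Injective (J.X n)) ∧
      (∃ N₀ N₁ : ℤ, ∀ n, (n < N₀ ∨ N₁ < n) → IsZero (J.X n)) ∧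
      QuasiIso (homothetyHom D J ι)

/-- `M ∈ D_b(R)` is `a`-adically finite: `RHom(R/a, M) ∈ D^f(R)` and
`supp M ⊆ V(a)`. -/
def AdicallyFinite (a : Ideal R) (M : Cplx R) : Prop :=
  Dbdd M ∧ FgH (homCplx (resC (ModuleCat.of R (R ⧸ a))) M) ∧ supp M ⊆ primeV a

end


noncomputable section Stmt13Aux

namespace Stmt13Aux

open CochainComplex.HomComplex

variable {R : Type} [CommRing R]

section CochainSingle

variable {F : Cplx R} {E : ModuleCat.{0} R}

/-- The essential component of a cochain into a complex concentrated in degree `0`. -/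
def cval {n : ℤ} (z : Cochain F (sMod E) n) : F.X (-n) ⟶ (sMod E).X 0 :=
  z.v (-n) 0 (by omega)

lemma cval_zero (n : ℤ) : cval (0 : Cochain F (sMod E) n) = 0 := rfl

lemma eq_of_cval {n : ℤ} {z w : Cochain F (sMod E) n} (h : cval z = cval w) :
    z = w := by
  refine Cochain.ext _ _ (fun p q hpq => ?_)
  by_cases hq : q = 0
  · subst hq
    obtain rfl : p = -n := by omega
    exact h
  · exact (HomologicalComplex.isZero_single_obj_X (ComplexShape.up ℤ) 0 E q hq).eq_of_tgt _ _

/-- The cochain with prescribed essential component. -/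
def fromVal {n : ℤ} (f : F.X (-n) ⟶ (sMod E).X 0) : Cochain F (sMod E) n :=
  Cochain.mk (fun p q hpq =>
    if hq : q = 0 then
      eqToHom (congrArg F.X (show p = -n by omega)) ≫ f ≫
        eqToHom (congrArg (sMod E).X hq.symm)
    else 0)

lemma cval_fromVal {n : ℤ} (f : F.X (-n) ⟶ (sMod E).X 0) : cval (fromVal f) = f := by
  simp [cval, fromVal]

lemma cval_δ {m n : ℤ} (h : m + 1 = n) (w : Cochain F (sMod E) m) :
    cval (δ m n w) = n.negOnePow • (F.d (-n) (-m) ≫ cval w) := by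
  dsimp only [cval]
  rw [δ_v m n h w (-n) 0 (by omega) (-1) (-m) (by omega) (by omega)]
  rw [show (sMod E).d (-1) 0 = 0 from HomologicalComplex.single_obj_d _ _ _ _ _,
    comp_zero, zero_add]

lemma exactAt_homCplx_single_iff (F : Cplx R) (E : ModuleCat.{0} R) (n : ℤ) :
    (homCplx F (sMod E)).ExactAt n ↔
      ∀ f : F.X (-n) ⟶ (sMod E).X 0, F.d (-(n+1)) (-n) ≫ f = 0 →
        ∃ g : F.X (-(n-1)) ⟶ (sMod E).X 0, F.d (-n) (-(n-1)) ≫ g = f := by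
  rw [(homCplx F (sMod E)).exactAt_iff' (n-1) n (n+1)
    (ComplexShape.prev_eq' _ (by simp)) (ComplexShape.next_eq' _ (by simp)),
    ShortComplex.moduleCat_exact_iff]
  constructor
  · intro hex f hf
    have hδ : (homCplx F (sMod E)).d n (n+1) (fromVal f) = (0 : Cochain F (sMod E) (n+1)) := by
      show δ n (n+1) (fromVal f) = 0
      apply eq_of_cval
      rw [cval_δ rfl, cval_fromVal, hf, smul_zero, cval_zero]
    obtain ⟨w, hw⟩ := hex (fromVal f) hδ
    have h2 : cval (δ (n-1) n w) = f := by
      have h3 := congrArg cval hw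
      rwa [cval_fromVal] at h3
    rw [cval_δ (by omega) w] at h2
    refine ⟨n.negOnePow • cval w, ?_⟩
    rw [CategoryTheory.Linear.comp_units_smul]
    exact h2
  · intro hcrit (z : Cochain F (sMod E) n) hz
    have hz0 : cval (δ n (n+1) z) = 0 := congrArg cval hz
    rw [cval_δ rfl] at hz0
    have hz' : F.d (-(n+1)) (-n) ≫ cval z = 0 := by
      rwa [smul_eq_zero_iff_eq] at hz0
    obtain ⟨g, hg⟩ := hcrit (cval z) hz'
    refine ⟨fromVal (n.negOnePow • g), ?_⟩
    show δ (n-1) n _ = z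
    apply eq_of_cval
    rw [cval_δ (by omega), cval_fromVal, CategoryTheory.Linear.comp_units_smul,
      smul_smul, Int.units_mul_self, one_smul, hg]

end CochainSingle

section Resolution

/-- The chosen projective resolution underlying `resC`. -/
def PRes (M : ModuleCat.{0} R) : CategoryTheory.ProjectiveResolution M :=
  (HasProjectiveResolution.out (Z := M)).some

lemma isZero_resC_X (M : ModuleCat.{0} R) (j : ℤ) (hj : 0 < j) :
    IsZero ((resC M).X j) :=
  HomologicalComplex.isZero_extend_X _ _ j
    (fun i => by simp only [ComplexShape.embeddingDownNat_f]; omega)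

/-- Identification of the components of `resC` with those of the resolution. -/
def resCXIso (M : ModuleCat.{0} R) {k : ℕ} {j : ℤ} (h : -(k:ℤ) = j) :
    (resC M).X j ≅ (PRes M).complex.X k :=
  (PRes M).complex.extendXIso ComplexShape.embeddingDownNat
    (by simp only [ComplexShape.embeddingDownNat_f]; exact h)

lemma resC_d_eq (M : ModuleCat.{0} R) {k l : ℕ} {j i : ℤ} (hj : -(k:ℤ) = j)
    (hi : -(l:ℤ) = i) :
    (resC M).d j i = (resCXIso M hj).hom ≫ (PRes M).complex.d k l ≫ (resCXIso M hi).inv :=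
  HomologicalComplex.extend_d_eq _ _
    (by simp only [ComplexShape.embeddingDownNat_f]; exact hj)
    (by simp only [ComplexShape.embeddingDownNat_f]; exact hi)

/-- The augmentation `P₀ ⟶ M` of the chosen projective resolution. -/
def πres (M : ModuleCat.{0} R) : (PRes M).complex.X 0 ⟶ M := (PRes M).π.f 0

lemma d_πres (M : ModuleCat.{0} R) : (PRes M).complex.d 1 0 ≫ πres M = 0 :=
  (PRes M).complex_d_comp_π_f_zero

lemma πres_cancel {M W : ModuleCat.{0} R} (a : M ⟶ W) (h : πres M ≫ a = 0) : a = 0 :=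
  Cofork.IsColimit.hom_ext (PRes M).isColimitCokernelCofork
    (h.trans comp_zero.symm)

lemma πres_desc {M W : ModuleCat.{0} R} (f' : (PRes M).complex.X 0 ⟶ W)
    (hf' : (PRes M).complex.d 1 0 ≫ f' = 0) : ∃ φ : M ⟶ W, πres M ≫ φ = f' := by
  obtain ⟨φ, hφ⟩ := CokernelCofork.IsColimit.desc' (PRes M).isColimitCokernelCofork f' hf'
  exact ⟨φ, hφ⟩

lemma acyc_homCplx_iff (M E : ModuleCat.{0} R) (hInj : Injective E) :
    Acyc (homCplx (resC M) (sMod E)) ↔ ∀ φ : M ⟶ E, φ = 0 := by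
  have hsingle : Injective ((sMod E).X 0) :=
    Injective.of_iso (HomologicalComplex.singleObjXSelf (ComplexShape.up ℤ) 0 E).symm hInj
  set ε : (sMod E).X 0 ≅ E := HomologicalComplex.singleObjXSelf (ComplexShape.up ℤ) 0 E
    with hε
  constructor
  · intro hA φ
    have hex := (exactAt_homCplx_single_iff (resC M) E 0).mp
      (((homCplx (resC M) (sMod E)).exactAt_iff_isZero_homology 0).mpr (hA 0))
    set i0 : (resC M).X (-0) ≅ (PRes M).complex.X 0 := resCXIso M (by omega) with hi0
    set f : (resC M).X (-0) ⟶ (sMod E).X 0 := i0.hom ≫ πres M ≫ φ ≫ ε.inv with hf0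
    have hf : (resC M).d (-(0+1)) (-0) ≫ f = 0 := by
      rw [resC_d_eq M (k := 1) (l := 0) (by omega) (by omega), hf0]
      simp only [hi0, Category.assoc, Iso.inv_hom_id_assoc]
      rw [reassoc_of% (d_πres M)]
      simp
    obtain ⟨g, hg⟩ := hex f hf
    have hd01 : (resC M).d (-0) (-(0-1)) = 0 :=
      (isZero_resC_X M (-(0-1)) (by omega)).eq_of_tgt _ _
    rw [hd01, zero_comp] at hg
    have h1 : πres M ≫ φ ≫ ε.inv = 0 := by
      apply (cancel_epi i0.hom).mp
      rw [comp_zero, ← hf0, ← hg]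
    have h2 : φ ≫ ε.inv = 0 := πres_cancel _ h1
    calc φ = (φ ≫ ε.inv) ≫ ε.hom := by simp
    _ = 0 := by rw [h2, zero_comp]
  · intro h0 n
    rw [← (homCplx (resC M) (sMod E)).exactAt_iff_isZero_homology n,
      exactAt_homCplx_single_iff]
    rcases lt_trichotomy n 0 with hn|rfl|hn
    · intro f _
      have hz := isZero_resC_X M (-n) (by omega)
      exact ⟨0, by rw [comp_zero]; exact (hz.eq_of_src f 0).symm⟩
    · intro f hf
      set i0 : (resC M).X (-0) ≅ (PRes M).complex.X 0 := resCXIso M (by omega) with hi0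
      set i1 : (resC M).X (-(0+1)) ≅ (PRes M).complex.X 1 := resCXIso M (by omega) with hi1
      have hf' : (PRes M).complex.d 1 0 ≫ (i0.inv ≫ f) = 0 := by
        apply (cancel_epi i1.hom).mp
        rw [comp_zero]
        rw [resC_d_eq M (k := 1) (l := 0) (by omega) (by omega)] at hf
        simpa [hi0, hi1] using hf
      obtain ⟨φ', hφ'⟩ := πres_desc (i0.inv ≫ f) hf'
      have hφ0 : φ' = 0 := by
        have h3 := h0 (φ' ≫ ε.hom)
        calc φ' = (φ' ≫ ε.hom) ≫ ε.inv := by simp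
        _ = 0 := by rw [h3, zero_comp]
      have hfz : f = 0 := by
        calc f = i0.hom ≫ (i0.inv ≫ f) := by simp
        _ = i0.hom ≫ (πres M ≫ φ') := by rw [hφ']
        _ = 0 := by rw [hφ0]; simp
      exact ⟨0, by rw [comp_zero, hfz]⟩
    · intro f hf
      obtain ⟨m, hm⟩ : ∃ m : ℕ, ((m:ℤ) + 1 = n) := ⟨(n-1).toNat, by omega⟩
      set i2 : (resC M).X (-(n+1)) ≅ (PRes M).complex.X (m+2) := resCXIso M (by push_cast; omega)
        with hi2
      set i1 : (resC M).X (-n) ≅ (PRes M).complex.X (m+1) := resCXIso M (by push_cast; omega)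
        with hi1
      set i0 : (resC M).X (-(n-1)) ≅ (PRes M).complex.X m := resCXIso M (by push_cast; omega)
        with hi0
      have hS := (PRes M).exact_succ m
      have hf' : (PRes M).complex.d (m+2) (m+1) ≫ (i1.inv ≫ f) = 0 := by
        apply (cancel_epi i2.hom).mp
        rw [comp_zero]
        rw [resC_d_eq M (k := m+2) (l := m+1) (by push_cast; omega) (by push_cast; omega)] at hf
        simpa [hi2, hi1] using hf
      refine ⟨i0.hom ≫ hS.descToInjective (i1.inv ≫ f) hf', ?_⟩
      have hcd := hS.comp_descToInjective (i1.inv ≫ f) hf'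
      rw [resC_d_eq M (k := m+1) (l := m) (by push_cast; omega) (by push_cast; omega)]
      simp only [hi0, Category.assoc, Iso.inv_hom_id_assoc]
      rw [hcd]
      simp [hi1]

end Resolution

section Hull

lemma hom_eq_zero (p q : PrimeSpectrum R) (E : ModuleCat.{0} R)
    (hE : IsInjectiveHull (ModuleCat.of R (R ⧸ p.asIdeal)) E)
    (h : ¬ q.asIdeal ≤ p.asIdeal) : ∀ f : kappa q ⟶ E, f = 0 := by
  obtain ⟨hEinj, f0, hf0, hess⟩ := hE
  obtain ⟨x, hxq, hxp⟩ := SetLike.not_le_iff_exists.mp h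
  have hkill : ∀ mq : LocalizedModule q.asIdeal.primeCompl (R ⧸ q.asIdeal), x • mq = 0 := by
    intro mq
    refine LocalizedModule.induction_on (fun a s => ?_) mq
    rw [LocalizedModule.smul'_mk]
    obtain ⟨r, rfl⟩ := Submodule.Quotient.mk_surjective _ a
    rw [← Submodule.Quotient.mk_smul]
    rw [show x • r = x * r from rfl,
      (Submodule.Quotient.mk_eq_zero _).mpr (Ideal.mul_mem_right r _ hxq)]
    exact LocalizedModule.zero_mk s
  intro f
  refine ModuleCat.hom_ext (LinearMap.ext (fun mq => show f mq = 0 from ?_))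
  have h1 : x • f mq = 0 := by rw [← map_smul, show x • mq = 0 from hkill mq, map_zero]
  by_contra hne
  set e : E := f mq with he
  have hN : Submodule.span R {e} ⊓ LinearMap.range f0.hom = ⊥ := by
    rw [eq_bot_iff]
    rintro y hy
    obtain ⟨hy1, hy2⟩ := Submodule.mem_inf.mp hy
    obtain ⟨r, rfl⟩ := Submodule.mem_span_singleton.mp hy1
    obtain ⟨a, ha⟩ := hy2
    have hxy : x • (r • e) = 0 := by rw [smul_comm, h1, smul_zero]
    have hfa : f0.hom (x • a) = 0 := by rw [map_smul, ha, hxy]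
    have hxa : x • a = 0 := hf0 (show f0.hom (x • a) = f0.hom 0 by rw [hfa, map_zero])
    obtain ⟨b, rfl⟩ := Submodule.Quotient.mk_surjective _ a
    rw [← Submodule.Quotient.mk_smul, Submodule.Quotient.mk_eq_zero] at hxa
    have hb : b ∈ p.asIdeal := by
      rcases p.isPrime.mem_or_mem (show x * b ∈ p.asIdeal by rwa [smul_eq_mul] at hxa) with h'|h'
      · exact absurd h' hxp
      · exact h'
    have hb0 : Submodule.Quotient.mk b = (0 : R ⧸ p.asIdeal) :=
      (Submodule.Quotient.mk_eq_zero _).mpr hb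
    rw [← ha, hb0, map_zero]
    exact Submodule.zero_mem ⊥
  have hsp := hess _ hN
  exact hne (by
    have : e ∈ Submodule.span R {e} := Submodule.mem_span_singleton_self e
    rw [hsp] at this
    simpa using this)

lemma exists_nonzero_hom (p q : PrimeSpectrum R) (E : ModuleCat.{0} R)
    (hE : IsInjectiveHull (ModuleCat.of R (R ⧸ p.asIdeal)) E)
    (hqp : q.asIdeal ≤ p.asIdeal) : ∃ f : kappa q ⟶ E, f ≠ 0 := by
  obtain ⟨hEinj, f0, hf0, _⟩ := hE
  haveI := hEinj
  set g1 : (R ⧸ q.asIdeal) →ₗ[R] (R ⧸ p.asIdeal) :=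
    Submodule.mapQ _ _ LinearMap.id (by simpa using hqp) with hg1
  set ι : ModuleCat.of R (R ⧸ q.asIdeal) ⟶ kappa q :=
    ModuleCat.ofHom (LocalizedModule.mkLinearMap q.asIdeal.primeCompl (R ⧸ q.asIdeal)) with hι
  have hker : ∀ a : R ⧸ q.asIdeal, ι a = 0 → a = 0 := by
    intro a ha
    have h0 : LocalizedModule.mk a (1 : q.asIdeal.primeCompl)
        = LocalizedModule.mk (0 : R ⧸ q.asIdeal) 1 := by
      rw [LocalizedModule.zero_mk]
      exact ha
    obtain ⟨u, hu⟩ := LocalizedModule.mk_eq.mp h0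
    simp only [one_smul, smul_zero] at hu
    obtain ⟨a', rfl⟩ := Submodule.Quotient.mk_surjective _ a
    have hu' : (u : R) * a' ∈ q.asIdeal := by
      rw [Submonoid.smul_def, ← Submodule.Quotient.mk_smul,
        Submodule.Quotient.mk_eq_zero] at hu
      rwa [smul_eq_mul] at hu
    have ha' : a' ∈ q.asIdeal := by
      rcases q.isPrime.mem_or_mem hu' with h'|h'
      · exact absurd h' u.2
      · exact h'
    rwa [Submodule.Quotient.mk_eq_zero]
  have hinj : Function.Injective ι := by
    intro a b hab
    have := hker (a - b) (by rw [map_sub, hab, sub_self])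
    exact sub_eq_zero.mp this
  haveI : Mono ι := (ModuleCat.mono_iff_injective _).mpr hinj
  set g0 : ModuleCat.of R (R ⧸ q.asIdeal) ⟶ E := ModuleCat.ofHom (f0.hom ∘ₗ g1) with hg0
  refine ⟨Injective.factorThru g0 ι, ?_⟩
  intro hzero
  have hfact := Injective.comp_factorThru g0 ι
  have h1 : g0 (Submodule.Quotient.mk 1) = 0 := by
    rw [← hfact]
    show Injective.factorThru g0 ι (ι (Submodule.Quotient.mk 1)) = 0
    rw [hzero]
    rfl
  have h2 : f0 (Submodule.Quotient.mk 1 : R ⧸ p.asIdeal) = 0 := by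
    have : g1 (Submodule.Quotient.mk 1) = (Submodule.Quotient.mk 1 : R ⧸ p.asIdeal) := by
      rw [hg1, Submodule.mapQ_apply, LinearMap.id_apply]
    rw [hg0] at h1
    show f0 (Submodule.Quotient.mk (1:R)) = 0
    rw [← this]
    exact h1
  have h3 : (Submodule.Quotient.mk 1 : R ⧸ p.asIdeal) = 0 := hf0 (by rw [h2, map_zero])
  rw [Submodule.Quotient.mk_eq_zero] at h3
  exact p.isPrime.ne_top ((Ideal.eq_top_iff_one _).mpr h3)

end Hull

end Stmt13Aux

end Stmt13Aux

/-! **Statement 13** (Proposition 5.3 of the paper).  For a prime `p` of `R`,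
the small co-support of the injective hull `E_R(R/p)` is
`{q ∈ Spec R | q ⊆ p}`. -/
theorem statement13 {R : Type} [CommRing R] [IsNoetherianRing R]
    (p : PrimeSpectrum R) (E : ModuleCat.{0} R)
    (hE : IsInjectiveHull (ModuleCat.of R (R ⧸ p.asIdeal)) E) :
    cosupp (sMod E) = {q : PrimeSpectrum R | q.asIdeal ≤ p.asIdeal} := by
  ext q
  have hiff := Stmt13Aux.acyc_homCplx_iff (kappa q) E hE.1
  simp only [cosupp, Set.mem_setOf_eq]
  constructor
  · intro hq
    by_contra hle
    exact hq (hiff.mpr (Stmt13Aux.hom_eq_zero p q E hE hle))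
  · intro hle hacyc
    obtain ⟨f, hf⟩ := Stmt13Aux.exists_nonzero_hom p q E hE hle
    exact hf (hiff.mp hacyc f)
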